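/- Let κ ∈ [0,1], δ > 0, K > 0, and let A be a set of prime numbers such that | #{ p ∈ A : p ≤ t } − κ·t/log t | ≤ K·t/(log t)^{1+δ} for all real t ≥ 2. Then the limit lim_{s → 1⁺} ( Σ_{p ∈ A} p^{−s} − κ·log(1/(s−1)) ) exists and is finite (the series Σ_{p ∈ A} p^{−s} converging for every real s > 1). -/

import Mathlib

open MeasureTheory Filter Set Real
open scoped Classical

lemma phi_bound {v : ℝ} (hv : 0 < v) : ‖(Real.exp (-v) - 1) / v‖ ≤ 1 := by
  have h1 : Real.exp (-v) ≤ 1 := by rw [Real.exp_le_one_iff]; linarith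
  have h2 : 1 - v ≤ Real.exp (-v) := by have := Real.add_one_le_exp (-v); linarith
  rw [Real.norm_eq_abs, abs_div, abs_of_pos hv, div_le_one hv, abs_of_nonpos (by linarith)]
  linarith

lemma phi_integrable : IntegrableOn (fun v : ℝ => (Real.exp (-v) - 1) / v) (Ioc (0:ℝ) 1) := by
  have hmeas : Measurable (fun v : ℝ => (Real.exp (-v) - 1) / v) :=
    ((Real.measurable_exp.comp measurable_neg).sub measurable_const).div measurable_id
  refine Integrable.mono' (g := fun _ => (1:ℝ))
    (integrableOn_const measure_Ioc_lt_top.ne) hmeas.aestronglyMeasurable ?_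
  exact (ae_restrict_iff' measurableSet_Ioc).mpr (Eventually.of_forall fun v hv => phi_bound hv.1)

lemma psi_integrable_Ioi {a : ℝ} (ha : 0 < a) :
    IntegrableOn (fun v : ℝ => Real.exp (-v) / v) (Ioi a) := by
  have hmeas : Measurable (fun v : ℝ => Real.exp (-v) / v) :=
    (Real.measurable_exp.comp measurable_neg).div measurable_id
  refine Integrable.mono' ((exp_neg_integrableOn_Ioi a one_pos).div_const a)
    hmeas.aestronglyMeasurable ?_
  refine (ae_restrict_iff' measurableSet_Ioi).mpr (Eventually.of_forall fun v hv => ?_)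
  have hv0 : 0 < v := ha.trans hv
  rw [Real.norm_eq_abs, abs_div, abs_of_pos hv0, abs_of_pos (Real.exp_pos _), neg_one_mul]
  exact div_le_div_of_nonneg_left (Real.exp_pos _).le ha (le_of_lt hv)

lemma E1_limit : ∃ L : ℝ, Tendsto
    (fun a : ℝ => (∫ v in Ioi a, Real.exp (-v) / v) + Real.log a)
    (nhdsWithin 0 (Ioi 0)) (nhds L) := by
  set φ : ℝ → ℝ := fun v => (Real.exp (-v) - 1) / v with hφ
  set ψ : ℝ → ℝ := fun v => Real.exp (-v) / v with hψ
  refine ⟨(∫ v in Ioc (0:ℝ) 1, φ v) + ∫ v in Ioi (1:ℝ), ψ v, ?_⟩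
  have key : ∀ a ∈ Ioo (0:ℝ) 1,
      (∫ v in Ioi a, ψ v) + Real.log a
        = ((∫ v in Ioc (0:ℝ) 1, φ v) + ∫ v in Ioi (1:ℝ), ψ v) - ∫ v in Ioc (0:ℝ) a, φ v := by
    intro a ha
    have ha0 : 0 < a := ha.1
    have ha1 : a < 1 := ha.2
    have hφa : IntegrableOn φ (Ioc a 1) :=
      phi_integrable.mono_set (Ioc_subset_Ioc_left ha0.le)
    have hinv : IntegrableOn (fun v : ℝ => 1 / v) (Ioc a 1) := by
      refine Integrable.mono' (g := fun _ => a⁻¹)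
        (integrableOn_const measure_Ioc_lt_top.ne)
        ((measurable_const.div measurable_id).aestronglyMeasurable) ?_
      refine (ae_restrict_iff' measurableSet_Ioc).mpr (Eventually.of_forall fun v hv => ?_)
      rw [Real.norm_eq_abs, abs_div, abs_one, abs_of_pos (ha0.trans hv.1), one_div]
      exact inv_anti₀ ha0 hv.1.le
    have hsplit : (∫ v in Ioi a, ψ v) = (∫ v in Ioc a 1, ψ v) + ∫ v in Ioi (1:ℝ), ψ v := by
      rw [← Ioc_union_Ioi_eq_Ioi ha1.le]
      exact setIntegral_union (Ioc_disjoint_Ioi le_rfl) measurableSet_Ioi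
        ((psi_integrable_Ioi ha0).mono_set (Ioc_subset_Ioi_self))
        (psi_integrable_Ioi one_pos)
    have hsplit2 : (∫ v in Ioc a 1, ψ v) = (∫ v in Ioc a 1, φ v) + ∫ v in Ioc a 1, (1 / v) := by
      rw [← integral_add hφa hinv]
      refine setIntegral_congr_fun measurableSet_Ioc fun v hv => ?_
      have : v ≠ 0 := (ha0.trans hv.1).ne'
      simp only [hψ, hφ]; rw [← add_div, sub_add_cancel]
    have hlog : (∫ v in Ioc a 1, (1:ℝ) / v) = - Real.log a := by
      rw [← intervalIntegral.integral_of_le ha1.le]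
      rw [integral_one_div (by
        intro h
        rcases (Set.mem_uIcc.mp h) with h' | h' <;> linarith [h'.1, h'.2])]
      rw [one_div, Real.log_inv]
    have hsplit3 : (∫ v in Ioc (0:ℝ) 1, φ v) = (∫ v in Ioc (0:ℝ) a, φ v) + ∫ v in Ioc a 1, φ v := by
      rw [← Ioc_union_Ioc_eq_Ioc ha0.le ha1.le]
      exact setIntegral_union (Ioc_disjoint_Ioc.mpr ((min_le_left a 1).trans (le_max_right 0 a)))
        measurableSet_Ioc (phi_integrable.mono_set (Ioc_subset_Ioc_right ha1.le)) hφa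
    rw [hsplit, hsplit2, hlog, hsplit3]
    ring
  have hrem : Tendsto (fun a : ℝ => ∫ v in Ioc (0:ℝ) a, φ v) (nhdsWithin 0 (Ioi 0)) (nhds 0) := by
    have hb : ∀ a ∈ Ioo (0:ℝ) 1, |∫ v in Ioc (0:ℝ) a, φ v| ≤ a := by
      intro a ha
      have : ‖∫ v in Ioc (0:ℝ) a, φ v‖ ≤ 1 * (volume (Ioc (0:ℝ) a)).toReal :=
        norm_setIntegral_le_of_norm_le_const measure_Ioc_lt_top
          (fun v hv => phi_bound hv.1)
      rw [Real.norm_eq_abs] at this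
      calc |∫ v in Ioc (0:ℝ) a, φ v| ≤ 1 * (volume (Ioc (0:ℝ) a)).toReal := this
        _ = a := by rw [one_mul, Real.volume_Ioc, ENNReal.toReal_ofReal (by linarith [ha.1])]; ring
    have h0 : Tendsto (fun a : ℝ => a) (nhdsWithin 0 (Ioi 0)) (nhds 0) :=
      tendsto_id.mono_right nhdsWithin_le_nhds
    rw [tendsto_zero_iff_abs_tendsto_zero]
    refine squeeze_zero' ?_ ?_ h0
    · filter_upwards with a using abs_nonneg _
    · filter_upwards [Ioo_mem_nhdsGT_of_mem (by norm_num : (0:ℝ) ∈ Ico (0:ℝ) 1)] with a ha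
        using hb a ha
  have heq : (fun a : ℝ => (∫ v in Ioi a, ψ v) + Real.log a)
      =ᶠ[nhdsWithin 0 (Ioi 0)]
      (fun a : ℝ => ((∫ v in Ioc (0:ℝ) 1, φ v) + ∫ v in Ioi (1:ℝ), ψ v)
        - ∫ v in Ioc (0:ℝ) a, φ v) := by
    filter_upwards [Ioo_mem_nhdsGT_of_mem (by norm_num : (0:ℝ) ∈ Ico (0:ℝ) 1)] with a ha
      using key a ha
  refine Tendsto.congr' heq.symm ?_
  simpa using (tendsto_const_nhds.sub hrem)

lemma g_contOn (s : ℝ) : ContinuousOn (fun t : ℝ => t ^ (-s) / Real.log t) (Ioi (1:ℝ)) := by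
  intro t ht
  have ht1 : (1:ℝ) < t := ht
  have ht0 : (0:ℝ) < t := by linarith
  exact ContinuousAt.continuousWithinAt
    (((Real.continuousAt_rpow_const t (-s) (Or.inl ht0.ne')).div
      (Real.continuousAt_log ht0.ne') (Real.log_ne_zero_of_pos_of_ne_one ht0 ht1.ne')))

lemma g_meas (s : ℝ) : Measurable (fun t : ℝ => t ^ (-s) / Real.log t) := by
  have h1 : Measurable (fun t : ℝ => t ^ (-s)) := by measurability
  exact h1.div Real.measurable_log

-- integrability of t^{-s}/log t on Ici 2 for s > 1
lemma g_integrable {s : ℝ} (hs : 1 < s) :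
    IntegrableOn (fun t : ℝ => t ^ (-s) / Real.log t) (Ici (2:ℝ)) := by
  rw [integrableOn_Ici_iff_integrableOn_Ioi]
  have hint : IntegrableOn (fun t : ℝ => t ^ (-s)) (Ioi (2:ℝ)) :=
    integrableOn_Ioi_rpow_of_lt (by linarith) two_pos
  refine Integrable.mono' (hint.div_const (Real.log 2)) ((g_meas s).aestronglyMeasurable) ?_
  refine (ae_restrict_iff' measurableSet_Ioi).mpr (Eventually.of_forall fun t ht => ?_)
  have ht2 : (2:ℝ) < t := ht
  have htpos : (0:ℝ) < t := by linarith
  have hlog2 : (0:ℝ) < Real.log 2 := Real.log_pos (by norm_num)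
  have hlogt : Real.log 2 ≤ Real.log t := Real.log_le_log (by norm_num) ht2.le
  rw [Real.norm_eq_abs, abs_div, abs_of_pos (Real.rpow_pos_of_pos htpos _),
    abs_of_pos (by linarith)]
  exact div_le_div_of_nonneg_left (Real.rpow_pos_of_pos htpos _).le hlog2 hlogt

-- the substitution t = exp (v/(s-1))
lemma subst_lemma {s : ℝ} (hs : 1 < s) :
    (∫ t in Ioi (2:ℝ), t ^ (-s) / Real.log t)
      = ∫ v in Ioi ((s-1) * Real.log 2), Real.exp (-v) / v := by
  have hs1 : (0:ℝ) < s - 1 := by linarith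
  set a : ℝ := (s-1) * Real.log 2 with ha
  have hlog2 : (0:ℝ) < Real.log 2 := Real.log_pos (by norm_num)
  have ha0 : 0 < a := mul_pos hs1 hlog2
  set f : ℝ → ℝ := fun v => Real.exp (v / (s-1)) with hf
  set f' : ℝ → ℝ := fun v => Real.exp (v / (s-1)) / (s-1) with hf'
  set g : ℝ → ℝ := fun t => t ^ (-s) / Real.log t with hg
  have hfa : f a = 2 := by
    show Real.exp ((s-1) * Real.log 2 / (s-1)) = 2
    rw [mul_comm, mul_div_assoc, div_self hs1.ne', mul_one, Real.exp_log two_pos]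
  have himage1 : ∀ v, a < v → 2 < f v := by
    intro v hv
    rw [← hfa]
    exact Real.exp_lt_exp.mpr (by gcongr)
  have himage1' : f '' Ioi a ⊆ Ioi (2:ℝ) := by
    rintro _ ⟨v, hv, rfl⟩; exact himage1 v hv
  have himage2 : f '' Ici a ⊆ Ici (2:ℝ) := by
    rintro _ ⟨v, hv, rfl⟩
    rw [← hfa]
    exact Real.exp_le_exp.mpr (by gcongr; exact hv)
  have hderiv : ∀ v, HasDerivAt f (f' v) v := by
    intro v
    have h1 : HasDerivAt (fun v : ℝ => v / (s-1)) (1/(s-1)) v := (hasDerivAt_id v).div_const _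
    have := (Real.hasDerivAt_exp (v / (s-1))).comp v h1
    exact this.congr_deriv (by rw [mul_one_div])
  have hpt : ∀ v ∈ Ici a, g (f v) * f' v = Real.exp (-v) / v := by
    intro v hv
    have hv0 : 0 < v := lt_of_lt_of_le ha0 hv
    have hexp : Real.exp (v/(s-1)) ^ (-s) = Real.exp (v/(s-1) * (-s)) := by
      rw [← Real.exp_mul]
    show (Real.exp (v/(s-1))) ^ (-s) / Real.log (Real.exp (v/(s-1)))
        * (Real.exp (v/(s-1)) / (s-1)) = Real.exp (-v) / v
    rw [hexp, Real.log_exp, div_mul_div_comm, ← Real.exp_add]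
    have e1 : v/(s-1) * (-s) + v/(s-1) = -v := by field_simp; ring
    have e2 : v/(s-1) * (s-1) = v := div_mul_cancel₀ _ hs1.ne'
    rw [e1, e2]
  have hg2 : IntegrableOn (fun v => (g ∘ f) v * f' v) (Ici a) := by
    have hgf : EqOn (fun v => (g ∘ f) v * f' v) (fun v => Real.exp (-v)/v) (Ici a) :=
      fun v hv => hpt v hv
    rw [integrableOn_congr_fun hgf measurableSet_Ici, integrableOn_Ici_iff_integrableOn_Ioi]
    exact psi_integrable_Ioi ha0
  have := integral_comp_mul_deriv_Ioi (f := f) (f' := f') (g := g)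
    (fun v _ => (hderiv v).continuousAt.continuousWithinAt)
    ?_ (fun v _ => (hderiv v).hasDerivWithinAt)
    ((g_contOn s).mono (himage1'.trans (Ioi_subset_Ioi one_le_two)))
    ((g_integrable hs).mono_set himage2) hg2
  · rw [← hfa, ← this]
    refine setIntegral_congr_fun measurableSet_Ioi fun v hv => ?_
    simpa [Function.comp] using hpt v (Set.mem_Ici.mpr (le_of_lt hv))
  · exact Real.tendsto_exp_atTop.comp (tendsto_id.atTop_div_const hs1)

lemma tsum_indicator_const {S : Set ℕ} (hS : S.Finite) (c : ℝ) :
    ∑' p : ℕ, S.indicator (fun _ => c) p = (S.ncard : ℝ) * c := by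
  rw [tsum_eq_sum (s := hS.toFinset)
    (fun b hb => Set.indicator_of_notMem (by simpa using hb) _)]
  rw [Finset.sum_congr rfl (fun b hb => Set.indicator_of_mem (by simpa using hb : b ∈ S) _)]
  rw [Finset.sum_const, Set.ncard_eq_toFinset_card S hS, nsmul_eq_mul]

lemma lt_set_finite (A : Set ℕ) (t : ℝ) : {p : ℕ | p ∈ A ∧ (p:ℝ) < t}.Finite := by
  refine Set.Finite.subset (Set.finite_Iio (⌈t⌉₊ + 1)) fun p hp => ?_
  have : (p:ℝ) < t := hp.2
  have := Nat.lt_ceil.mpr this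
  simpa using this.trans (Nat.lt_succ_self _)

lemma le_set_finite (A : Set ℕ) (t : ℝ) : {p : ℕ | p ∈ A ∧ (p:ℝ) ≤ t}.Finite := by
  refine Set.Finite.subset (lt_set_finite A (t+1)) fun p hp => ⟨hp.1, by linarith [hp.2]⟩

variable {A : Set ℕ}

lemma sum_eq_integral (hA : ∀ p ∈ A, Nat.Prime p) {s : ℝ} (hs : 1 < s) :
    ∑' p : A, ((p : ℕ) : ℝ) ^ (-s)
      = s * ∫ t in Ioi (2:ℝ),
          ((Set.ncard {p : ℕ | p ∈ A ∧ (p : ℝ) ≤ t} : ℝ) * t ^ (-s-1)) := by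
  have hs1 : -s - 1 < -1 := by linarith
  set g : ℝ → ℝ := fun t => t ^ (-s-1) with hg
  set F : ℕ → ℝ → ℝ := fun p t => if p ∈ A then (Ioi (p:ℝ)).indicator g t else 0 with hF
  have hgmeas : Measurable g := by measurability
  -- each F p integrable on Ioi 2
  have hFint : ∀ p : ℕ, Integrable (F p) (volume.restrict (Ioi (2:ℝ))) := by
    intro p
    by_cases hp : p ∈ A
    · simp only [hF, if_pos hp]
      rw [integrable_indicator_iff measurableSet_Ioi]
      have h2 : IntegrableOn g (Ioi (2:ℝ)) := integrableOn_Ioi_rpow_of_lt hs1 two_pos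
      exact h2.integrable.integrableOn
    · simp only [hF, if_neg hp]
      exact integrable_zero _ _ _
  have hFnn : ∀ p t, 0 ≤ F p t := by
    intro p t
    simp only [hF]
    split
    · refine Set.indicator_nonneg (fun x hx => ?_) t
      have hx0 : (0:ℝ) < x := lt_of_le_of_lt (Nat.cast_nonneg p) hx
      exact (Real.rpow_pos_of_pos hx0 _).le
    · exact le_refl 0
  have hval : ∀ p ∈ A, (∫ t in Ioi (2:ℝ), F p t) = (p:ℝ)^(-s) / s := by
    intro p hp
    have hp2 : (2:ℕ) ≤ p := (hA p hp).two_le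
    have hp2' : (2:ℝ) ≤ (p:ℝ) := by exact_mod_cast hp2
    have hppos : (0:ℝ) < (p:ℝ) := by linarith
    simp only [hF, if_pos hp]
    rw [integral_indicator measurableSet_Ioi, Measure.restrict_restrict measurableSet_Ioi,
      Set.Ioi_inter_Ioi]
    rw [show ((p:ℝ) ⊔ 2) = (p:ℝ) from sup_eq_left.mpr hp2']
    rw [hg, integral_Ioi_rpow_of_lt hs1 hppos]
    rw [show (-s - 1 + 1 : ℝ) = -s by ring]
    rw [neg_div, div_neg, neg_neg]
  have hval0 : ∀ p ∉ A, (∫ t in Ioi (2:ℝ), F p t) = 0 := by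
    intro p hp
    simp only [hF, if_neg hp]
    exact integral_zero _ _
  have hsummable : Summable (fun p : ℕ => ((p:ℝ)^(-s) / s)) :=
    (Real.summable_nat_rpow.mpr (by linarith)).div_const s
  have hnormval : ∀ p : ℕ, (∫ t in Ioi (2:ℝ), ‖F p t‖) = ∫ t in Ioi (2:ℝ), F p t := by
    intro p
    exact integral_congr_ae (Eventually.of_forall fun t => Real.norm_of_nonneg (hFnn p t))
  have hsum : Summable (fun p : ℕ => ∫ t in Ioi (2:ℝ), ‖F p t‖) := by
    refine Summable.of_nonneg_of_le (fun p => ?_) (fun p => ?_) hsummable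
    · exact integral_nonneg fun t => norm_nonneg _
    · rw [hnormval]
      by_cases hp : p ∈ A
      · rw [hval p hp]
      · rw [hval0 p hp]
        positivity
  have hswap := integral_tsum_of_summable_integral_norm hFint hsum
  -- LHS of hswap
  have hLHS : (∑' p : ℕ, ∫ t in Ioi (2:ℝ), F p t) = (∑' p : A, ((p:ℕ):ℝ)^(-s)) / s := by
    have h1 : (fun p : ℕ => ∫ t in Ioi (2:ℝ), F p t)
        = A.indicator (fun p : ℕ => (p:ℝ)^(-s) / s) := by
      funext p
      by_cases hp : p ∈ A
      · rw [hval p hp, Set.indicator_of_mem hp]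
      · rw [hval0 p hp, Set.indicator_of_notMem hp]
    rw [h1, ← tsum_subtype A (fun p : ℕ => (p:ℝ)^(-s) / s), tsum_div_const]
  -- pointwise sum
  have hpt : ∀ t : ℝ, (∑' p : ℕ, F p t)
      = (Set.ncard {p : ℕ | p ∈ A ∧ (p:ℝ) < t} : ℝ) * g t := by
    intro t
    have heq : (fun p : ℕ => F p t)
        = Set.indicator {p : ℕ | p ∈ A ∧ (p:ℝ) < t} (fun _ => g t) := by
      funext p
      by_cases hp : p ∈ A
      · by_cases hpt' : (p:ℝ) < t
        · rw [Set.indicator_of_mem (show p ∈ {p : ℕ | p ∈ A ∧ (p:ℝ) < t} from ⟨hp, hpt'⟩)]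
          simp only [hF, if_pos hp]
          exact Set.indicator_of_mem hpt' _
        · rw [Set.indicator_of_notMem (fun (h : p ∈ {p : ℕ | p ∈ A ∧ (p:ℝ) < t}) => hpt' h.2)]
          simp only [hF, if_pos hp]
          exact Set.indicator_of_notMem hpt' _
      · rw [Set.indicator_of_notMem (fun (h : p ∈ {p : ℕ | p ∈ A ∧ (p:ℝ) < t}) => hp h.1)]
        simp only [hF, if_neg hp]
    rw [heq, tsum_indicator_const (lt_set_finite A t)]
  -- a.e. equality with the ≤ version
  have hae : (fun t : ℝ => ∑' p : ℕ, F p t)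
      =ᵐ[volume.restrict (Ioi (2:ℝ))]
      (fun t : ℝ => (Set.ncard {p : ℕ | p ∈ A ∧ (p:ℝ) ≤ t} : ℝ) * t ^ (-s-1)) := by
    have hnull : volume (Set.range ((↑) : ℕ → ℝ)) = 0 :=
      Set.Countable.measure_zero (Set.countable_range _) _
    refine ae_restrict_of_ae ?_
    rw [ae_iff]
    refine measure_mono_null (fun t ht => ?_) hnull
    simp only [Set.mem_setOf_eq] at ht
    by_contra hmem
    apply ht
    have : {p : ℕ | p ∈ A ∧ (p:ℝ) < t} = {p : ℕ | p ∈ A ∧ (p:ℝ) ≤ t} := by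
      ext p
      refine ⟨fun h => ⟨h.1, h.2.le⟩, fun h => ⟨h.1, lt_of_le_of_ne h.2 fun hc => ?_⟩⟩
      exact hmem ⟨p, hc⟩
    rw [hpt t, this]
  have hRHS : (∫ t in Ioi (2:ℝ), ∑' p : ℕ, F p t)
      = ∫ t in Ioi (2:ℝ), ((Set.ncard {p : ℕ | p ∈ A ∧ (p:ℝ) ≤ t} : ℝ) * t ^ (-s-1)) :=
    integral_congr_ae hae
  rw [hLHS, hRHS] at hswap
  rw [← hswap]
  field_simp

lemma D_integrable {δ : ℝ} (hδ : 0 < δ) :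
    IntegrableOn (fun t : ℝ => t⁻¹ * Real.log t ^ (-(1+δ))) (Ioi (2:ℝ)) := by
  set g : ℝ → ℝ := fun t => -(Real.log t ^ (-δ) / δ) with hg
  have hderiv : ∀ t ∈ Ioi (2:ℝ), HasDerivAt g (t⁻¹ * Real.log t ^ (-(1+δ))) t := by
    intro t ht
    have ht2 : (2:ℝ) < t := ht
    have ht0 : t ≠ 0 := by positivity
    have hlogpos : 0 < Real.log t := Real.log_pos (by linarith)
    have h1 : HasDerivAt (fun t : ℝ => Real.log t ^ (-δ))
        (t⁻¹ * (-δ) * Real.log t ^ (-δ - 1)) t :=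
      (Real.hasDerivAt_log ht0).rpow_const (Or.inl hlogpos.ne')
    have h2 := (h1.div_const δ).neg
    refine h2.congr_deriv ?_
    rw [show -δ - 1 = -(1+δ) by ring]
    field_simp
  have hnonneg : ∀ t ∈ Ioi (2:ℝ), 0 ≤ t⁻¹ * Real.log t ^ (-(1+δ)) := by
    intro t ht
    have ht2 : (2:ℝ) < t := ht
    have hlogpos : 0 < Real.log t := Real.log_pos (by linarith)
    positivity
  have hcont : ContinuousWithinAt g (Ici (2:ℝ)) 2 := by
    refine ContinuousAt.continuousWithinAt ?_
    have hlogpos : (0:ℝ) < Real.log 2 := Real.log_pos (by norm_num)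
    exact (((Real.continuousAt_log (by norm_num)).rpow_const
      (Or.inl hlogpos.ne')).div_const δ).neg
  have htend : Tendsto g atTop (nhds 0) := by
    have h1 : Tendsto (fun t : ℝ => Real.log t ^ (-δ)) atTop (nhds 0) :=
      (tendsto_rpow_neg_atTop hδ).comp Real.tendsto_log_atTop
    have := ((h1.div_const δ).neg)
    simpa using this
  exact integrableOn_Ioi_deriv_of_nonneg hcont hderiv hnonneg htend


/-- Let `κ ∈ [0,1]`, `δ > 0`, `K > 0`, and let `A` be a set of primes with
`|#{p ∈ A : p ≤ t} - κ t/log t| ≤ K t/(log t)^{1+δ}` for all `t ≥ 2`.  Then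
the series `Σ_{p ∈ A} p^{-s}` converges for every real `s > 1` and the limit
`lim_{s → 1⁺} (Σ_{p ∈ A} p^{-s} - κ log(1/(s-1)))` exists and is finite. -/
theorem stmt_12 (κ δ K : ℝ) (hκ0 : 0 ≤ κ) (hκ1 : κ ≤ 1) (hδ : 0 < δ) (hK : 0 < K)
    (A : Set ℕ) (hA : ∀ p ∈ A, Nat.Prime p)
    (hcount : ∀ t : ℝ, 2 ≤ t →
      |(Set.ncard {p : ℕ | p ∈ A ∧ (p : ℝ) ≤ t} : ℝ) - κ * t / Real.log t| ≤
        K * t / Real.log t ^ (1 + δ)) :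
    (∀ s : ℝ, 1 < s → Summable (fun p : A => ((p : ℕ) : ℝ) ^ (-s))) ∧
    ∃ ℓ : ℝ, Filter.Tendsto
      (fun s : ℝ => (∑' p : A, ((p : ℕ) : ℝ) ^ (-s)) - κ * Real.log (1 / (s - 1)))
      (nhdsWithin 1 (Set.Ioi 1)) (nhds ℓ) := by
  have hlog2 : (0:ℝ) < Real.log 2 := Real.log_pos (by norm_num)
  have hsummable : ∀ s : ℝ, 1 < s → Summable (fun p : A => ((p : ℕ) : ℝ) ^ (-s)) := by
    intro s hs
    exact (Real.summable_nat_rpow.mpr (by linarith)).subtype A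
  refine ⟨hsummable, ?_⟩
  set cnt : ℝ → ℝ := fun t => ((Set.ncard {p : ℕ | p ∈ A ∧ (p:ℝ) ≤ t}) : ℝ) with hcnt
  have hcmono : Monotone cnt := by
    intro a b hab
    simp only [hcnt, Nat.cast_le]
    exact Set.ncard_le_ncard (fun p hp => ⟨hp.1, hp.2.trans hab⟩) (le_set_finite A b)
  have hcmeas : Measurable cnt := hcmono.measurable
  set EE : ℝ → ℝ := fun t => cnt t - κ * t / Real.log t with hEE
  have hEEmeas : Measurable EE :=
    hcmeas.sub ((measurable_const.mul measurable_id).div Real.measurable_log)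
  set D : ℝ → ℝ := fun t => K * (t⁻¹ * Real.log t ^ (-(1+δ))) with hD
  have hDint : IntegrableOn D (Ioi (2:ℝ)) := (D_integrable hδ).const_mul K
  have hbound : ∀ s : ℝ, 1 ≤ s → ∀ t ∈ Ioi (2:ℝ), ‖EE t * t ^ (-s-1)‖ ≤ D t := by
    intro s hs t ht
    have ht2 : (2:ℝ) < t := ht
    have ht0 : (0:ℝ) < t := by linarith
    have ht1 : (1:ℝ) ≤ t := by linarith
    have hlt : 0 < Real.log t := Real.log_pos (by linarith)
    have hltp : 0 < Real.log t ^ (1+δ) := Real.rpow_pos_of_pos hlt _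
    have hEb := hcount t ht2.le
    have hrp : (0:ℝ) < t ^ (-s-1) := Real.rpow_pos_of_pos ht0 _
    have h1 : t * t^(-s-1) = t ^ (-s) := by
      nth_rewrite 1 [← Real.rpow_one t]
      rw [← Real.rpow_add ht0]; ring_nf
    rw [norm_mul, Real.norm_eq_abs, Real.norm_eq_abs, abs_of_pos hrp]
    calc |EE t| * t ^ (-s-1) ≤ (K * t / Real.log t ^ (1+δ)) * t ^ (-s-1) :=
           mul_le_mul_of_nonneg_right hEb hrp.le
      _ = K * (t * t^(-s-1)) / Real.log t ^ (1+δ) := by ring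
      _ ≤ K * (t⁻¹) / Real.log t ^ (1+δ) := by
           gcongr
           rw [h1, ← Real.rpow_neg_one t]
           exact Real.rpow_le_rpow_of_exponent_le ht1 (by linarith)
      _ = D t := by
           show K * t⁻¹ / Real.log t ^ (1+δ) = K * (t⁻¹ * Real.log t ^ (-(1+δ)))
           rw [Real.rpow_neg hlt.le]
           ring
  set G : ℝ → ℝ := fun s => ∫ t in Ioi (2:ℝ), EE t * t ^ (-s-1) with hG
  have hGmeas : ∀ s : ℝ,
      AEStronglyMeasurable (fun t => EE t * t ^ (-s-1)) (volume.restrict (Ioi (2:ℝ))) := by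
    intro s
    have : Measurable (fun t : ℝ => t ^ (-s-1)) := by measurability
    exact (hEEmeas.mul this).aestronglyMeasurable
  have hGint : ∀ s : ℝ, 1 ≤ s → IntegrableOn (fun t => EE t * t ^ (-s-1)) (Ioi (2:ℝ)) := by
    intro s hs
    refine Integrable.mono' hDint (hGmeas s) ?_
    exact (ae_restrict_iff' measurableSet_Ioi).mpr
      (Eventually.of_forall fun t ht => hbound s hs t ht)
  have hGtend : Tendsto G (nhdsWithin 1 (Ioi 1)) (nhds (G 1)) := by
    refine tendsto_integral_filter_of_dominated_convergence D
      (Eventually.of_forall hGmeas) ?_ hDint ?_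
    · filter_upwards [self_mem_nhdsWithin] with s hs
      exact (ae_restrict_iff' measurableSet_Ioi).mpr
        (Eventually.of_forall fun t ht => hbound s (le_of_lt hs) t ht)
    · refine (ae_restrict_iff' measurableSet_Ioi).mpr (Eventually.of_forall fun t ht => ?_)
      have ht0 : (0:ℝ) < t := lt_trans two_pos ht
      have hc : ContinuousAt (fun s : ℝ => EE t * t ^ (-s-1)) 1 := by
        refine continuousAt_const.mul ?_
        exact ContinuousAt.rpow continuousAt_const
          ((continuousAt_id.neg).sub continuousAt_const) (Or.inl ht0.ne')
      exact hc.tendsto.mono_left nhdsWithin_le_nhds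
  have hptκ : ∀ s : ℝ, ∀ t ∈ Ioi (2:ℝ),
      κ * t / Real.log t * t ^ (-s-1) = κ * (t ^ (-s) / Real.log t) := by
    intro s t ht
    have ht0 : (0:ℝ) < t := lt_trans two_pos ht
    have h1 : t * t^(-s-1) = t ^ (-s) := by
      nth_rewrite 1 [← Real.rpow_one t]
      rw [← Real.rpow_add ht0]; ring_nf
    rw [div_mul_eq_mul_div, mul_assoc, h1, mul_div_assoc]
  have hκint : ∀ s : ℝ, 1 < s →
      IntegrableOn (fun t : ℝ => κ * t / Real.log t * t ^ (-s-1)) (Ioi (2:ℝ)) := by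
    intro s hs
    have base : IntegrableOn (fun t : ℝ => κ * (t ^ (-s) / Real.log t)) (Ioi (2:ℝ)) :=
      ((g_integrable hs).mono_set Ioi_subset_Ici_self).const_mul κ
    exact base.congr_fun (fun t ht => (hptκ s t ht).symm) measurableSet_Ioi
  have hdecomp : ∀ s : ℝ, 1 < s →
      (∑' p : A, ((p : ℕ) : ℝ) ^ (-s))
        = s * κ * (∫ v in Ioi ((s-1) * Real.log 2), Real.exp (-v) / v) + s * G s := by
    intro s hs
    rw [sum_eq_integral hA hs]
    have e1 : (∫ t in Ioi (2:ℝ), cnt t * t ^ (-s-1))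
        = ∫ t in Ioi (2:ℝ), (κ * t / Real.log t * t ^ (-s-1) + EE t * t ^ (-s-1)) := by
      refine setIntegral_congr_fun measurableSet_Ioi fun t ht => ?_
      rw [hEE]; ring
    have e2 : (∫ t in Ioi (2:ℝ), (κ * t / Real.log t * t ^ (-s-1) + EE t * t ^ (-s-1)))
        = (∫ t in Ioi (2:ℝ), κ * t / Real.log t * t ^ (-s-1)) + G s :=
      integral_add (hκint s hs) (hGint s hs.le)
    have e3 : (∫ t in Ioi (2:ℝ), κ * t / Real.log t * t ^ (-s-1))
        = κ * ∫ t in Ioi (2:ℝ), t ^ (-s) / Real.log t := by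
      rw [setIntegral_congr_fun measurableSet_Ioi (fun t ht => hptκ s t ht)]
      exact integral_const_mul κ _
    rw [e1, e2, e3, subst_lemma hs]
    ring
  obtain ⟨L, hL⟩ := E1_limit
  set C₂ : ℝ := Real.log (Real.log 2) with hC₂
  have hmap : Tendsto (fun s : ℝ => (s-1) * Real.log 2)
      (nhdsWithin 1 (Ioi 1)) (nhdsWithin 0 (Ioi 0)) := by
    rw [tendsto_nhdsWithin_iff]
    constructor
    · have : Tendsto (fun s : ℝ => (s-1) * Real.log 2) (nhds 1) (nhds ((1-1) * Real.log 2)) :=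
        ((continuous_id.sub continuous_const).mul continuous_const).continuousAt
      simpa using this.mono_left nhdsWithin_le_nhds
    · filter_upwards [self_mem_nhdsWithin] with s hs
      have : (1:ℝ) < s := hs
      exact mul_pos (by linarith) hlog2
  have hΦ : Tendsto (fun s : ℝ =>
      (∫ v in Ioi ((s-1) * Real.log 2), Real.exp (-v) / v) + Real.log ((s-1) * Real.log 2))
      (nhdsWithin 1 (Ioi 1)) (nhds L) := hL.comp hmap
  have hmap' : Tendsto (fun s : ℝ => s - 1)
      (nhdsWithin 1 (Ioi 1)) (nhdsWithin 0 (Ioi 0)) := by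
    rw [tendsto_nhdsWithin_iff]
    constructor
    · have : Tendsto (fun s : ℝ => s - 1) (nhds 1) (nhds (1-1)) :=
        (continuous_id.sub continuous_const).continuousAt
      simpa using this.mono_left nhdsWithin_le_nhds
    · filter_upwards [self_mem_nhdsWithin] with s hs
      have : (1:ℝ) < s := hs
      simpa using (by linarith : (0:ℝ) < s - 1)
  have hs1tend : Tendsto (fun s : ℝ => s - 1) (nhdsWithin 1 (Ioi 1)) (nhds 0) :=
    hmap'.mono_right nhdsWithin_le_nhds
  have hxlogx : Tendsto (fun s : ℝ => (s-1) * Real.log (s-1))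
      (nhdsWithin 1 (Ioi 1)) (nhds 0) := by
    have h := (tendsto_log_mul_rpow_nhdsGT_zero one_pos).comp hmap'
    refine h.congr' ?_
    filter_upwards [self_mem_nhdsWithin] with s hs
    have h1 : (1:ℝ) < s := hs
    show Real.log (s-1) * (s-1) ^ (1:ℝ) = (s-1) * Real.log (s-1)
    rw [Real.rpow_one]; ring
  have hid : Tendsto (fun s : ℝ => s) (nhdsWithin 1 (Ioi 1)) (nhds 1) :=
    tendsto_id.mono_right nhdsWithin_le_nhds |>.mono_right le_rfl
  refine ⟨κ * L - κ * C₂ + κ * (0 * L - 0 - 0 * C₂) + 1 * G 1, ?_⟩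
  have hRHS : Tendsto (fun s : ℝ =>
      κ * ((∫ v in Ioi ((s-1) * Real.log 2), Real.exp (-v) / v)
            + Real.log ((s-1) * Real.log 2))
        - κ * C₂
        + κ * ((s-1) * ((∫ v in Ioi ((s-1) * Real.log 2), Real.exp (-v) / v)
            + Real.log ((s-1) * Real.log 2))
          - (s-1) * Real.log (s-1) - (s-1) * C₂)
        + s * G s)
      (nhdsWithin 1 (Ioi 1))
      (nhds (κ * L - κ * C₂ + κ * (0 * L - 0 - 0 * C₂) + 1 * G 1)) := by
    refine Tendsto.add (Tendsto.add (Tendsto.sub (tendsto_const_nhds.mul hΦ)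
      tendsto_const_nhds) (tendsto_const_nhds.mul (Tendsto.sub
      (Tendsto.sub (hs1tend.mul hΦ) hxlogx) (hs1tend.mul tendsto_const_nhds))))
      (hid.mul hGtend)
  refine Tendsto.congr' ?_ hRHS
  filter_upwards [self_mem_nhdsWithin] with s hs
  have hs1 : (1:ℝ) < s := hs
  have h0 : (0:ℝ) < s - 1 := by linarith
  have hlogmul : Real.log ((s-1) * Real.log 2) = Real.log (s-1) + C₂ :=
    Real.log_mul h0.ne' hlog2.ne'
  rw [hdecomp s hs1, hlogmul]
  rw [one_div, Real.log_inv]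
  ring
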